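/- Let n≥1 be an integer, B ∈ ℝ, and λ_1,…,λ_n ∈ ℂ such that for every j ∈ {1,…,n}: −Im(λ_n + λ_{n−1} + ⋯ + λ_{n+1−j}) + j²/2 − j(B+1/2) < 0. Then the iterated integral over the simplex {0 < y_1 < y_2 < ⋯ < y_n} of exp( Σ_{j=1}^n ( −B − 1/2 + i λ_j + (2n+1−2j)/2 ) y_j ) dy_1 ⋯ dy_n converges absolutely and equals Π_{j=1}^n (−1)/( −j(B+1/2) + i(λ_n + ⋯ + λ_{n+1−j}) + j²/2 ). -/

import Mathlib

open Complex Finset MeasureTheory Set Filter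

lemma aux_integrableOn_cexp_mul (s : ℂ) (hs : s.re < 0) :
    MeasureTheory.IntegrableOn (fun x : ℝ => Complex.exp (s * x)) (Set.Ioi (0:ℝ)) := by
  have hb : (0:ℝ) < -s.re := by linarith
  refine (exp_neg_integrableOn_Ioi 0 hb).mono' ?_ ?_
  · exact ((Complex.continuous_exp.comp
      (continuous_const.mul Complex.continuous_ofReal)).aestronglyMeasurable).restrict
  · filter_upwards with x
    simp only [Complex.norm_exp, Complex.mul_re, Complex.ofReal_re,
      Complex.ofReal_im, mul_zero, sub_zero, neg_neg, neg_mul]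
    exact le_of_eq rfl

lemma aux_integral_cexp_mul (s : ℂ) (hs : s.re < 0) :
    ∫ x in Set.Ioi (0:ℝ), Complex.exp (s * x) = -1 / s := by
  have hs0 : s ≠ 0 := fun h => by simp [h] at hs
  have D : ∀ x : ℝ, HasDerivAt (fun y : ℝ => Complex.exp (s * y) / s) (Complex.exp (s * x)) x := by
    intro x
    conv => congr
    rw [← mul_div_cancel_right₀ (Complex.exp (s * x)) hs0]
    apply ((Complex.hasDerivAt_exp _).comp x _).div_const s
    simpa only [mul_one, id_eq] using ((hasDerivAt_id (x : ℂ)).const_mul _).comp_ofReal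
  have htend : Tendsto (fun x : ℝ => Complex.exp (s * x) / s) atTop (nhds 0) := by
    rw [tendsto_zero_iff_norm_tendsto_zero]
    have : (fun x : ℝ => ‖Complex.exp (s * x) / s‖) =
        fun x : ℝ => Real.exp (s.re * x) / ‖s‖ := by
      funext x
      simp [Complex.norm_exp, Complex.mul_re]
    rw [this]
    have h1 : Tendsto (fun x : ℝ => s.re * x) atTop atBot :=
      Tendsto.const_mul_atTop_of_neg hs tendsto_id
    simpa using (Real.tendsto_exp_atBot.comp h1).div_const ‖s‖
  have := integral_Ioi_of_hasDerivAt_of_tendsto (f := fun x : ℝ => Complex.exp (s * x) / s)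
    (f' := fun x : ℝ => Complex.exp (s * x)) (a := 0)
    (((Complex.continuous_exp.comp
      (continuous_const.mul Complex.continuous_ofReal)).div_const s).continuousWithinAt)
    (fun x _ => D x) (aux_integrableOn_cexp_mul s hs) htend
  rw [this]
  simp [neg_div]

lemma aux_sum_range_cast (m : ℕ) : ∑ t ∈ Finset.range m, (t : ℂ) = m * (m - 1) / 2 := by
  induction m with
  | zero => simp
  | succ m ih => rw [Finset.sum_range_succ, ih]; push_cast; ring

set_option maxRecDepth 4000 in
/-- **Simplex integral `G_{n,w}` for the overlap computation.**
Under the convergence condition `−Im(λ_n+⋯+λ_{n+1−j}) + j²/2 − j(B+1/2) < 0` for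
every `j ∈ {1,…,n}`, the iterated integral over `{0 < y₁ < ⋯ < y_n}` of
`exp( Σ_j (−B−1/2 + iλ_j + (2n+1−2j)/2) y_j )` converges absolutely and equals
`Π_{j=1}^n (−1)/( −j(B+1/2) + i(λ_n+⋯+λ_{n+1−j}) + j²/2 )`. -/
theorem simplex_exponential_integral (n : ℕ) (hn : 1 ≤ n) (B : ℝ) (lam : Fin n → ℂ)
    (hconv : ∀ j ∈ Finset.range n,
      -(∑ l ∈ Finset.univ.filter (fun l : Fin n => n - (j + 1) ≤ (l : ℕ)), lam l).im
        + ((j : ℝ) + 1) ^ 2 / 2 - ((j : ℝ) + 1) * (B + 1 / 2) < 0) :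
    MeasureTheory.IntegrableOn
      (fun y : Fin n → ℝ => Complex.exp (∑ j : Fin n,
        (-(B : ℂ) - 1 / 2 + I * lam j + (2 * (n : ℂ) + 1 - 2 * (((j : ℕ) : ℂ) + 1)) / 2)
          * (y j : ℂ)))
      {y : Fin n → ℝ | (∀ i, 0 < y i) ∧ StrictMono y} ∧
    (∫ y in {y : Fin n → ℝ | (∀ i, 0 < y i) ∧ StrictMono y},
      Complex.exp (∑ j : Fin n,
        (-(B : ℂ) - 1 / 2 + I * lam j + (2 * (n : ℂ) + 1 - 2 * (((j : ℕ) : ℂ) + 1)) / 2)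
          * (y j : ℂ)))
      = ∏ j ∈ Finset.range n,
          (-1) / (-(((j : ℕ) : ℂ) + 1) * ((B : ℂ) + 1 / 2)
            + I * (∑ l ∈ Finset.univ.filter (fun l : Fin n => n - (j + 1) ≤ (l : ℕ)), lam l)
            + (((j : ℕ) : ℂ) + 1) ^ 2 / 2) := by
  classical
  set c : Fin n → ℂ := fun j =>
    -(B : ℂ) - 1 / 2 + I * lam j + (2 * (n : ℂ) + 1 - 2 * (((j : ℕ) : ℂ) + 1)) / 2 with hc
  set s : Fin n → ℂ := fun k => ∑ j ∈ Finset.univ.filter (fun j : Fin n => k ≤ j), c j with hs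
  set S : Set (Fin n → ℝ) := {y : Fin n → ℝ | (∀ i, 0 < y i) ∧ StrictMono y} with hS
  set Q : Set (Fin n → ℝ) := {x : Fin n → ℝ | ∀ i, 0 < x i} with hQ
  set M : Matrix (Fin n) (Fin n) ℝ := Matrix.of fun j k => if k ≤ j then 1 else 0 with hM
  set L : (Fin n → ℝ) →ₗ[ℝ] (Fin n → ℝ) := Matrix.toLin' M with hL
  have hLapply : ∀ (x : Fin n → ℝ) (j : Fin n),
      L x j = ∑ k ∈ Finset.univ.filter (fun k : Fin n => k ≤ j), x k := by
    intro x j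
    simp [hL, Matrix.toLin'_apply, Matrix.mulVec, dotProduct, hM, ite_mul, Finset.sum_filter]
  have hdet : M.det = 1 := by
    rw [Matrix.det_of_lowerTriangular M]
    · simp [hM]
    · intro i j hij
      simp only [hM, Matrix.of_apply, ite_eq_right_iff]
      intro h
      exact absurd h (not_le.mpr hij)
  have hLdet : LinearMap.det L = 1 := by rw [hL, LinearMap.det_toLin', hdet]
  have hLmeas : Measurable L := L.continuous_of_finiteDimensional.measurable
  have mp : MeasurePreserving (⇑L) (volume : Measure (Fin n → ℝ)) volume := by
    refine ⟨hLmeas, ?_⟩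
    rw [Real.map_linearMap_volume_pi_eq_smul_volume_pi (by rw [hLdet]; norm_num), hLdet]
    simp
  have hinj : Function.Injective (⇑L) := by
    have : Function.Injective (M.mulVec) :=
      Matrix.mulVec_injective_iff_isUnit.mpr (M.isUnit_iff_isUnit_det.mpr (by rw [hdet]; exact isUnit_one))
    intro a b hab
    apply this
    simpa [hL, Matrix.toLin'_apply] using hab
  have emb : MeasurableEmbedding (⇑L) := hLmeas.measurableEmbedding hinj
  -- decomposition of partial sums
  have sumdiff : ∀ (x : Fin n → ℝ) (i j : Fin n), i ≤ j →
      L x j = L x i + ∑ k ∈ Finset.univ.filter (fun k : Fin n => k ≤ j ∧ ¬ k ≤ i), x k := by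
    intro x i j hij
    rw [hLapply, hLapply]
    rw [← Finset.sum_filter_add_sum_filter_not (Finset.univ.filter (fun k : Fin n => k ≤ j))
      (fun k => k ≤ i)]
    congr 1
    · apply Finset.sum_congr _ (fun _ _ => rfl)
      rw [Finset.filter_filter]
      apply Finset.filter_congr
      intro k _
      simp only [and_iff_right_iff_imp]
      exact fun hk => le_trans hk hij
    · rw [Finset.filter_filter]
  have hpre : ⇑L ⁻¹' S = Q := by
    ext x
    simp only [Set.mem_preimage, hS, hQ, Set.mem_setOf_eq]
    constructor
    · rintro ⟨hpos, hmono⟩ i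
      by_cases h0 : (i : ℕ) = 0
      · have hf : Finset.univ.filter (fun k : Fin n => k ≤ i) = {i} := by
          ext k
          simp only [Finset.mem_filter, Finset.mem_univ, true_and, Finset.mem_singleton,
            Fin.le_def, Fin.ext_iff, h0, Nat.le_zero]
        have := hpos i
        rwa [hLapply, hf, Finset.sum_singleton] at this
      · obtain ⟨m, hm⟩ := Nat.exists_eq_succ_of_ne_zero h0
        have hmlt : m < n := by omega
        set i' : Fin n := ⟨m, hmlt⟩ with hi'
        have hii : i' < i := by simp [Fin.lt_def, hi', hm]
        have hsum := sumdiff x i' i (le_of_lt hii)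
        have hfe : Finset.univ.filter (fun k : Fin n => k ≤ i ∧ ¬ k ≤ i') = {i} := by
          ext k
          simp only [Finset.mem_filter, Finset.mem_univ, true_and, Finset.mem_singleton,
            Fin.le_def, Fin.ext_iff, hi', hm, not_le]
          omega
        rw [hfe, Finset.sum_singleton] at hsum
        have h2 := hmono hii
        linarith
    · intro hx
      constructor
      · intro i
        rw [hLapply]
        exact Finset.sum_pos (fun k _ => hx k) ⟨i, by simp⟩
      · intro a b hab
        have hsum := sumdiff x a b (le_of_lt hab)
        have hposs : 0 < ∑ k ∈ Finset.univ.filter (fun k : Fin n => k ≤ b ∧ ¬ k ≤ a), x k :=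
          Finset.sum_pos (fun k _ => hx k) ⟨b, by simp [not_le, hab]⟩
        linarith
  have hcomp : ∀ x : Fin n → ℝ,
      Complex.exp (∑ j : Fin n, c j * ((L x j : ℝ) : ℂ))
        = ∏ k : Fin n, Complex.exp (s k * ((x k : ℝ) : ℂ)) := by
    intro x
    rw [← Complex.exp_sum]
    congr 1
    have hcast : ∀ j : Fin n, ((L x j : ℝ) : ℂ)
        = ∑ k ∈ Finset.univ.filter (fun k : Fin n => k ≤ j), ((x k : ℝ) : ℂ) := by
      intro j; rw [hLapply]; push_cast; rfl
    calc ∑ j : Fin n, c j * ((L x j : ℝ) : ℂ)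
        = ∑ j : Fin n, ∑ k : Fin n, (if k ≤ j then c j * ((x k : ℝ) : ℂ) else 0) := by
          refine Finset.sum_congr rfl fun j _ => ?_
          rw [hcast j, Finset.mul_sum, Finset.sum_filter]
      _ = ∑ k : Fin n, ∑ j : Fin n, (if k ≤ j then c j * ((x k : ℝ) : ℂ) else 0) :=
          Finset.sum_comm
      _ = ∑ k : Fin n, s k * ((x k : ℝ) : ℂ) := by
          refine Finset.sum_congr rfl fun k _ => ?_
          rw [← Finset.sum_filter, ← Finset.sum_mul]
  have key : ∀ (k : ℕ), k ≤ n → ∀ (G : ℕ → ℂ),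
      ∑ l ∈ Finset.univ.filter (fun l : Fin n => k ≤ (l : ℕ)), G (l : ℕ)
        = ∑ t ∈ Finset.range (n - k), G (k + t) := by
    intro k hk G
    rw [Finset.sum_filter, Fin.sum_univ_eq_sum_range (fun u => if k ≤ u then G u else 0) n,
      ← Finset.sum_filter]
    have hico : (Finset.range n).filter (fun u => k ≤ u) = Finset.Ico k n := by
      ext u; simp [Finset.mem_Ico, and_comm]
    rw [hico, Finset.sum_Ico_eq_sum_range]
  have hface : ∀ k : Fin n, Finset.univ.filter (fun j : Fin n => k ≤ j)
      = Finset.univ.filter (fun l : Fin n => (k : ℕ) ≤ (l : ℕ)) := by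
    intro k
    apply Finset.filter_congr
    intro l _
    exact Fin.le_def
  have hval : ∀ k : Fin n, s k
      = -((((n - (k : ℕ) : ℕ)) : ℂ)) * ((B : ℂ) + 1 / 2)
        + I * (∑ l ∈ Finset.univ.filter (fun l : Fin n => (k : ℕ) ≤ (l : ℕ)), lam l)
        + ((((n - (k : ℕ) : ℕ)) : ℂ)) ^ 2 / 2 := by
    intro k
    have hkn : (k : ℕ) ≤ n := le_of_lt k.isLt
    have hm : ((((n - (k : ℕ) : ℕ)) : ℂ)) = (n : ℂ) - ((k : ℕ) : ℂ) := by
      push_cast [Nat.cast_sub hkn]; ring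
    rw [show s k = ∑ j ∈ Finset.univ.filter (fun j : Fin n => k ≤ j),
      (-(B : ℂ) - 1 / 2 + I * lam j + (2 * (n : ℂ) + 1 - 2 * (((j : ℕ) : ℂ) + 1)) / 2) from rfl]
    rw [hface k, Finset.sum_add_distrib, Finset.sum_add_distrib]
    have e1 : ∑ _l ∈ Finset.univ.filter (fun l : Fin n => (k : ℕ) ≤ (l : ℕ)), (-(B:ℂ) - 1/2)
        = ∑ _t ∈ Finset.range (n - (k : ℕ)), (-(B:ℂ) - 1/2) := key _ hkn (fun _ => -(B:ℂ) - 1/2)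
    have e3 : ∑ l ∈ Finset.univ.filter (fun l : Fin n => (k : ℕ) ≤ (l : ℕ)),
          (2 * (n : ℂ) + 1 - 2 * (((l : ℕ) : ℂ) + 1)) / 2
        = ∑ t ∈ Finset.range (n - (k : ℕ)),
            (2 * (n : ℂ) + 1 - 2 * ((((k : ℕ) + t : ℕ) : ℂ) + 1)) / 2 :=
      key _ hkn (fun u => (2 * (n : ℂ) + 1 - 2 * ((u : ℂ) + 1)) / 2)
    rw [e1, e3, ← Finset.mul_sum]
    rw [Finset.sum_const, Finset.card_range]
    have e3' : ∑ t ∈ Finset.range (n - (k : ℕ)),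
          (2 * (n : ℂ) + 1 - 2 * ((((k : ℕ) + t : ℕ) : ℂ) + 1)) / 2
        = ∑ t ∈ Finset.range (n - (k : ℕ)), ((n : ℂ) - ((k : ℕ) : ℂ) - 1/2 - (t : ℂ)) := by
      refine Finset.sum_congr rfl fun t _ => ?_
      push_cast
      ring
    rw [e3', Finset.sum_sub_distrib, Finset.sum_const, Finset.card_range, aux_sum_range_cast]
    rw [nsmul_eq_mul, nsmul_eq_mul, hm]
    ring
  have hre : ∀ k : Fin n, (s k).re < 0 := by
    intro k
    have hkn : (k : ℕ) < n := k.isLt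
    have hj : n - 1 - (k : ℕ) ∈ Finset.range n := Finset.mem_range.mpr (by omega)
    have hcv := hconv _ hj
    have h2 : n - (n - 1 - (k : ℕ) + 1) = (k : ℕ) := by omega
    rw [h2] at hcv
    have h3 : ((n - 1 - (k : ℕ) : ℕ) : ℝ) + 1 = ((n - (k : ℕ) : ℕ) : ℝ) := by
      rw [← Nat.cast_add_one]
      congr 1
      omega
    rw [h3] at hcv
    have hsk : s k = (((-(((n - (k : ℕ) : ℕ)) : ℝ) * (B + 1 / 2)
          + (((n - (k : ℕ) : ℕ)) : ℝ) ^ 2 / 2 : ℝ)) : ℂ)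
        + I * (∑ l ∈ Finset.univ.filter (fun l : Fin n => (k : ℕ) ≤ (l : ℕ)), lam l) := by
      rw [hval k]
      push_cast
      ring
    rw [hsk]
    simp only [Complex.add_re, Complex.ofReal_re, Complex.mul_re, Complex.I_re, Complex.I_im,
      zero_mul, one_mul, zero_sub]
    linarith
  set g : Fin n → ℝ → ℂ :=
    fun k => (Set.Ioi (0:ℝ)).indicator (fun t : ℝ => Complex.exp (s k * t)) with hg
  have hgint : ∀ k, Integrable (g k) := fun k =>
    (integrable_indicator_iff measurableSet_Ioi).mpr (aux_integrableOn_cexp_mul _ (hre k))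
  have hgval : ∀ k, ∫ t : ℝ, g k t = -1 / s k := by
    intro k
    rw [hg]
    rw [integral_indicator measurableSet_Ioi]
    exact aux_integral_cexp_mul _ (hre k)
  have hQmeas : MeasurableSet Q := by
    have : Q = Set.pi Set.univ (fun _ : Fin n => Set.Ioi (0:ℝ)) := by
      ext x; simp [hQ, Set.mem_pi]
    rw [this]
    exact MeasurableSet.univ_pi fun _ => measurableSet_Ioi
  have hind : ∀ x : Fin n → ℝ, (∏ k : Fin n, g k (x k))
      = Q.indicator (fun x : Fin n → ℝ =>
          ∏ k : Fin n, Complex.exp (s k * ((x k : ℝ) : ℂ))) x := by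
    intro x
    by_cases hx : x ∈ Q
    · rw [Set.indicator_of_mem hx]
      exact Finset.prod_congr rfl fun k _ => Set.indicator_of_mem (hx k) _
    · rw [Set.indicator_of_notMem hx]
      obtain ⟨i, hi⟩ := not_forall.mp hx
      exact Finset.prod_eq_zero (Finset.mem_univ i) (Set.indicator_of_notMem hi _)
  have h1 : Integrable (fun x : Fin n → ℝ => ∏ k : Fin n, g k (x k)) :=
    Integrable.fintype_prod hgint
  rw [funext hind] at h1
  have h2 : IntegrableOn
      (fun x : Fin n → ℝ => ∏ k : Fin n, Complex.exp (s k * ((x k : ℝ) : ℂ))) Q :=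
    (integrable_indicator_iff hQmeas).mp h1
  have hfeq : (fun y : Fin n → ℝ =>
        Complex.exp (∑ j : Fin n, c j * ((y j : ℝ) : ℂ))) ∘ ⇑L
      = fun x : Fin n → ℝ => ∏ k : Fin n, Complex.exp (s k * ((x k : ℝ) : ℂ)) :=
    funext fun x => hcomp x
  have hIS : IntegrableOn
      (fun y : Fin n → ℝ => Complex.exp (∑ j : Fin n, c j * ((y j : ℝ) : ℂ))) S := by
    rw [← mp.integrableOn_comp_preimage emb, hpre, hfeq]
    exact h2
  have hint : ∫ y in S, Complex.exp (∑ j : Fin n, c j * ((y j : ℝ) : ℂ))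
      = ∏ k : Fin n, (-1 / s k) := by
    rw [← mp.setIntegral_preimage_emb emb
      (fun y : Fin n → ℝ => Complex.exp (∑ j : Fin n, c j * ((y j : ℝ) : ℂ))) S, hpre]
    calc ∫ x in Q, Complex.exp (∑ j : Fin n, c j * ((L x j : ℝ) : ℂ))
        = ∫ x in Q, ∏ k : Fin n, Complex.exp (s k * ((x k : ℝ) : ℂ)) := by
          rw [show (fun x : Fin n → ℝ => Complex.exp (∑ j : Fin n, c j * ((L x j : ℝ) : ℂ)))
            = fun x : Fin n → ℝ => ∏ k : Fin n, Complex.exp (s k * ((x k : ℝ) : ℂ))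
            from funext fun x => hcomp x]
      _ = ∫ x : Fin n → ℝ, Q.indicator (fun x : Fin n → ℝ =>
            ∏ k : Fin n, Complex.exp (s k * ((x k : ℝ) : ℂ))) x :=
          (integral_indicator hQmeas).symm
      _ = ∫ x : Fin n → ℝ, ∏ k : Fin n, g k (x k) := by rw [← funext hind]
      _ = ∏ k : Fin n, ∫ t : ℝ, g k t := integral_fintype_prod_volume_eq_prod (ι := Fin n) g
      _ = ∏ k : Fin n, (-1 / s k) := Finset.prod_congr rfl fun k _ => hgval k
  set F : ℕ → ℂ := fun u => if h : u < n then -1 / s ⟨u, h⟩ else 1 with hF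
  have hprod : ∏ k : Fin n, (-1 / s k)
      = ∏ j ∈ Finset.range n,
          (-1) / (-(((j : ℕ) : ℂ) + 1) * ((B : ℂ) + 1 / 2)
            + I * (∑ l ∈ Finset.univ.filter (fun l : Fin n => n - (j + 1) ≤ (l : ℕ)), lam l)
            + (((j : ℕ) : ℂ) + 1) ^ 2 / 2) := by
    calc ∏ k : Fin n, (-1 / s k) = ∏ k : Fin n, F (k : ℕ) := by
          refine Finset.prod_congr rfl fun k _ => ?_
          rw [hF]
          simp only [Fin.isLt, dif_pos, Fin.eta]
      _ = ∏ u ∈ Finset.range n, F u := Fin.prod_univ_eq_prod_range F n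
      _ = ∏ j ∈ Finset.range n, F (n - 1 - j) := (Finset.prod_range_reflect F n).symm
      _ = _ := by
          refine Finset.prod_congr rfl fun j hj => ?_
          have hjn : j < n := Finset.mem_range.mp hj
          have hlt : n - 1 - j < n := by omega
          rw [hF]
          simp only [hlt, dif_pos]
          rw [hval ⟨n - 1 - j, hlt⟩]
          have e1 : n - ((⟨n - 1 - j, hlt⟩ : Fin n) : ℕ) = j + 1 := by
            simp only [Fin.val_mk]; omega
          have e2 : n - (j + 1) = ((⟨n - 1 - j, hlt⟩ : Fin n) : ℕ) := by
            simp only [Fin.val_mk]; omega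
          rw [e1, ← e2]
          push_cast
          ring_nf
  constructor
  · exact hIS
  · rw [hint, hprod]
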